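/- Let Γ be a subgroup of SL(2, ℂ) and let Δ be a subgroup of Γ of finite index. Then every element of Γ has trace an algebraic integer if and only if every element of Δ has trace an algebraic integer. -/

import Mathlib

open Polynomial Matrix

/-- Cayley–Hamilton for explicit 2×2 matrices of determinant 1. -/
lemma sl2_sq_aux (a b c d : ℂ) (h : a * d - b * c = 1) :
    !![a, b; c, d] * !![a, b; c, d] = (a + d) • !![a, b; c, d] - 1 := by
  ext i j
  fin_cases i <;> fin_cases j <;>
    simp [Matrix.mul_apply, Fin.sum_univ_two, Matrix.one_apply] <;>
    first
      | linear_combination h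
      | linear_combination -h
      | linear_combination 2 * h
      | linear_combination -2 * h
      | ring

/-- Cayley–Hamilton for 2×2 matrices of determinant 1. -/
lemma sl2_sq (M : Matrix (Fin 2) (Fin 2) ℂ) (hdet : M.det = 1) :
    M * M = M.trace • M - 1 := by
  rw [Matrix.det_fin_two] at hdet
  have h := sl2_sq_aux (M 0 0) (M 0 1) (M 1 0) (M 1 1) hdet
  rw [← Matrix.eta_fin_two M] at h
  rw [Matrix.trace_fin_two]
  exact h

/-- Trace of powers in terms of an eigenvalue. -/
lemma trace_pow_eq (M : Matrix (Fin 2) (Fin 2) ℂ) (hdet : M.det = 1)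
    (l : ℂ) (hl : l ≠ 0) (hrec : M.trace = l + l⁻¹) :
    ∀ n : ℕ, (M ^ n).trace = l ^ n + l⁻¹ ^ n := by
  have key : ∀ n : ℕ, (M ^ n).trace = l ^ n + l⁻¹ ^ n ∧
      (M ^ (n + 1)).trace = l ^ (n + 1) + l⁻¹ ^ (n + 1) := by
    intro n
    induction n with
    | zero =>
      refine ⟨by norm_num [Matrix.trace_one], by simpa using hrec⟩
    | succ n ih =>
      refine ⟨ih.2, ?_⟩
      have h2 : M ^ (n + 2) = M.trace • M ^ (n + 1) - M ^ n := by
        have e : M ^ (n + 2) = M ^ n * (M * M) := by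
          rw [pow_succ, pow_succ, mul_assoc]
        rw [e, sl2_sq M hdet, mul_sub, mul_smul_comm, mul_one, ← pow_succ]
      rw [h2, Matrix.trace_sub, Matrix.trace_smul, smul_eq_mul, ih.1, ih.2, hrec]
      field_simp
      linear_combination (l * l⁻¹ ^ n - l⁻¹ * l⁻¹ ^ n) * mul_inv_cancel₀ hl
  exact fun n => (key n).1

/-- A root of `X^2 - sX + 1` with `s` an algebraic integer is an algebraic integer. -/
lemma quad_int {s x : ℂ} (hs : IsIntegral ℤ s) (hx : x * x = s * x - 1) :
    IsIntegral ℤ x := by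
  have h : IsIntegral (integralClosure ℤ ℂ) x := by
    refine ⟨X ^ 2 - (C ⟨s, hs⟩ * X - 1), ?_, ?_⟩
    · apply Polynomial.monic_X_pow_sub
      calc (C (⟨s, hs⟩ : integralClosure ℤ ℂ) * X - 1).degree
          ≤ max (C (⟨s, hs⟩ : integralClosure ℤ ℂ) * X).degree (1 : (integralClosure ℤ ℂ)[X]).degree :=
            degree_sub_le _ _
        _ ≤ max 1 0 := max_le_max (degree_C_mul_X_le _) degree_one_le
        _ < 2 := by norm_num
    · simp only [eval₂_sub, eval₂_mul, eval₂_pow, eval₂_X, eval₂_C, eval₂_one]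
      have hse : (algebraMap (integralClosure ℤ ℂ) ℂ) ⟨s, hs⟩ = s := rfl
      rw [hse]
      linear_combination hx
  exact isIntegral_trans x h

/-- If `tr(M^k)` is an algebraic integer for some `k ≥ 1` and `det M = 1`,
then `tr M` is an algebraic integer. -/
lemma trace_int_of_trace_pow_int (M : Matrix (Fin 2) (Fin 2) ℂ) (hdet : M.det = 1)
    {k : ℕ} (hk : 0 < k) (h : IsIntegral ℤ ((M ^ k).trace)) : IsIntegral ℤ M.trace := by
  -- produce an "eigenvalue" l with M.trace = l + l⁻¹
  have key : ∃ l : ℂ, l ≠ 0 ∧ M.trace = l + l⁻¹ := by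
    obtain ⟨u, hu⟩ := IsAlgClosed.exists_pow_nat_eq (M.trace ^ 2 - 4) (k := ℂ) zero_lt_two
    refine ⟨(M.trace + u) / 2, ?_, ?_⟩
    · intro h0
      have h1 : M.trace + u = 0 := by
        field_simp at h0
        linear_combination h0
      have h2 : u ^ 2 = M.trace ^ 2 := by
        have : u = -M.trace := by linear_combination h1
        rw [this]; ring
      have h4 : (4 : ℂ) = 0 := by linear_combination hu - h2
      norm_num at h4
    · have hmul1 : ((M.trace + u) / 2) * (M.trace - (M.trace + u) / 2) = 1 := by
        field_simp
        first
          | linear_combination hu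
          | linear_combination -hu
      have hinv : ((M.trace + u) / 2)⁻¹ = M.trace - (M.trace + u) / 2 :=
        inv_eq_of_mul_eq_one_right hmul1
      rw [hinv]; ring
  obtain ⟨l, hl, hrec⟩ := key
  have htr := trace_pow_eq M hdet l hl hrec
  have hs : IsIntegral ℤ (l ^ k + l⁻¹ ^ k) := by rw [← htr k]; exact h
  have hmul : l ^ k * l⁻¹ ^ k = 1 := by
    rw [← mul_pow, mul_inv_cancel₀ hl, one_pow]
  have hμ : IsIntegral ℤ (l ^ k) := by
    apply quad_int hs
    linear_combination -hmul
  have hν : IsIntegral ℤ (l⁻¹ ^ k) := by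
    have := hs.sub hμ
    simpa using this
  have hlint : IsIntegral ℤ l := IsIntegral.of_pow hk hμ
  have hlinv : IsIntegral ℤ l⁻¹ := IsIntegral.of_pow hk hν
  rw [hrec]
  exact hlint.add hlinv

/-- Let `Γ ≤ SL(2, ℂ)` and let `Δ` be a subgroup of `Γ` of finite index. Then
every element of `Γ` has algebraic-integer trace iff every element of `Δ` has
algebraic-integer trace. -/
theorem stmt_4 (Γ Δ : Subgroup (Matrix.SpecialLinearGroup (Fin 2) ℂ))
    (hle : Δ ≤ Γ) (hfin : Δ.relIndex Γ ≠ 0) :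
    (∀ γ ∈ Γ, IsIntegral ℤ (Matrix.trace (γ : Matrix (Fin 2) (Fin 2) ℂ))) ↔
      (∀ δ ∈ Δ, IsIntegral ℤ (Matrix.trace (δ : Matrix (Fin 2) (Fin 2) ℂ))) := by
  constructor
  · intro h δ hδ
    exact h δ (hle hδ)
  · intro h γ hγ
    obtain ⟨k, hk0, -, hmem⟩ := Subgroup.exists_pow_mem_of_relIndex_ne_zero hfin hγ
    have hint := h (γ ^ k) hmem.1
    have hcoe : ((γ ^ k : Matrix.SpecialLinearGroup (Fin 2) ℂ) : Matrix (Fin 2) (Fin 2) ℂ)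
        = (γ : Matrix (Fin 2) (Fin 2) ℂ) ^ k := by
      simp
    rw [hcoe] at hint
    exact trace_int_of_trace_pow_int (γ : Matrix (Fin 2) (Fin 2) ℂ) γ.2 hk0 hint
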